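/- Let L ∈ ℝ^{n₁×r} and R ∈ ℝ^{n₂×r} both have full column rank r, with SVDs L = U_L Σ_L V_Lᵀ and R = U_R Σ_R V_Rᵀ (V_L, V_R orthogonal r×r). Then the operator norm satisfies ‖L(LᵀL)⁻¹(RᵀR)⁻¹Rᵀ‖ = 1/σ_r(LRᵀ), where σ_r denotes the r-th largest singular value. -/

import Mathlib

open Matrix Finset

/-- Euclidean norm of a vector. -/
noncomputable def enorm₂ {ι : Type*} [Fintype ι] (x : ι → ℝ) : ℝ :=
  Real.sqrt (∑ i, x i ^ 2)

/-- Frobenius norm of a matrix. -/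
noncomputable def frob {ι κ : Type*} [Fintype ι] [Fintype κ] (A : Matrix ι κ ℝ) : ℝ :=
  Real.sqrt (∑ i, ∑ j, A i j ^ 2)

/-- Matrix inner product ⟨A,B⟩ = Tr(AᵀB). -/
noncomputable def minner {ι κ : Type*} [Fintype ι] [Fintype κ] (A B : Matrix ι κ ℝ) : ℝ :=
  ∑ i, ∑ j, A i j * B i j

/-- The k-th largest singular value, via the Courant–Fischer max-min characterization. -/
noncomputable def sval {ι κ : Type*} [Fintype ι] [Fintype κ] (A : Matrix ι κ ℝ) (k : ℕ) : ℝ :=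
  sSup {t : ℝ | ∃ V : Submodule ℝ (κ → ℝ), Module.finrank ℝ V = k ∧
    ∀ x ∈ V, t * enorm₂ x ≤ enorm₂ (A.mulVec x)}

/-- Spectral (operator) norm = largest singular value. -/
noncomputable def spec {ι κ : Type*} [Fintype ι] [Fintype κ] (A : Matrix ι κ ℝ) : ℝ :=
  sval A 1

set_option linter.unusedVariables false
set_option linter.unusedSectionVars false
open Metric Module

lemma enorm₂_eq_norm {ι : Type*} [Fintype ι] (x : ι → ℝ) :
    enorm₂ x = ‖(WithLp.equiv 2 (ι → ℝ)).symm x‖ := by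
  rw [EuclideanSpace.norm_eq, enorm₂]
  congr 1
  refine Finset.sum_congr rfl fun i _ => ?_
  rw [Real.norm_eq_abs, sq_abs]; rfl

lemma enorm₂_nonneg {ι : Type*} [Fintype ι] (x : ι → ℝ) : 0 ≤ enorm₂ x := Real.sqrt_nonneg _

lemma enorm₂_zero {ι : Type*} [Fintype ι] : enorm₂ (0 : ι → ℝ) = 0 := by simp [enorm₂]

lemma enorm₂_pos {ι : Type*} [Fintype ι] {x : ι → ℝ} (hx : x ≠ 0) : 0 < enorm₂ x := by
  rw [enorm₂_eq_norm]; simpa using hx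

lemma enorm₂_eq_sqrt_dot {ι : Type*} [Fintype ι] (x : ι → ℝ) :
    enorm₂ x = Real.sqrt (x ⬝ᵥ x) := by
  simp [enorm₂, dotProduct, sq]

lemma enorm₂_mulVec_of_orth {ι κ : Type*} [Fintype ι] [Fintype κ] [DecidableEq κ]
    {U : Matrix ι κ ℝ} (hU : Uᵀ * U = 1) (x : κ → ℝ) : enorm₂ (U *ᵥ x) = enorm₂ x := by
  rw [enorm₂_eq_sqrt_dot, enorm₂_eq_sqrt_dot]
  congr 1
  rw [dotProduct_mulVec, vecMul_mulVec, hU, vecMul_one]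

noncomputable def mcal {ι κ : Type*} [Fintype ι] [Fintype κ] [DecidableEq κ] (A : Matrix ι κ ℝ) :
    EuclideanSpace ℝ κ →L[ℝ] EuclideanSpace ℝ ι :=
  LinearMap.toContinuousLinearMap (Matrix.toEuclideanLin A)

lemma mcal_apply {ι κ : Type*} [Fintype ι] [Fintype κ] [DecidableEq κ] (A : Matrix ι κ ℝ)
    (x : EuclideanSpace ℝ κ) :
    mcal A x = (WithLp.equiv 2 (ι → ℝ)).symm (A *ᵥ (WithLp.equiv 2 (κ → ℝ)) x) := by
  rw [mcal, LinearMap.coe_toContinuousLinearMap', Matrix.toEuclideanLin_apply]; rfl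

lemma enorm₂_mulVec_eq {ι κ : Type*} [Fintype ι] [Fintype κ] [DecidableEq κ] (A : Matrix ι κ ℝ)
    (x : κ → ℝ) : enorm₂ (A *ᵥ x) = ‖mcal A ((WithLp.equiv 2 (κ → ℝ)).symm x)‖ := by
  rw [mcal_apply, ← enorm₂_eq_norm, Equiv.apply_symm_apply]

lemma exists_max_sphere {ι κ : Type*} [Fintype ι] [Fintype κ] [DecidableEq κ] [Nonempty κ]
    (A : Matrix ι κ ℝ) :
    ∃ x : EuclideanSpace ℝ κ, ‖x‖ = 1 ∧
      ∀ y : EuclideanSpace ℝ κ, ‖y‖ = 1 → ‖mcal A y‖ ≤ ‖mcal A x‖ := by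
  have hc : IsCompact (sphere (0 : EuclideanSpace ℝ κ) 1) := isCompact_sphere _ _
  have hne : (sphere (0 : EuclideanSpace ℝ κ) 1).Nonempty :=
    ⟨EuclideanSpace.single (Classical.arbitrary κ) 1, by simp [EuclideanSpace.norm_single]⟩
  obtain ⟨x, hx, hmax⟩ := hc.exists_isMaxOn hne ((mcal A).continuous.norm.continuousOn)
  rw [mem_sphere_zero_iff_norm] at hx
  exact ⟨x, hx, fun y hy => hmax (by rwa [mem_sphere_zero_iff_norm])⟩

lemma exists_min_sphere {ι κ : Type*} [Fintype ι] [Fintype κ] [DecidableEq κ] [Nonempty κ]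
    (A : Matrix ι κ ℝ) :
    ∃ x : EuclideanSpace ℝ κ, ‖x‖ = 1 ∧
      ∀ y : EuclideanSpace ℝ κ, ‖y‖ = 1 → ‖mcal A x‖ ≤ ‖mcal A y‖ := by
  have hc : IsCompact (sphere (0 : EuclideanSpace ℝ κ) 1) := isCompact_sphere _ _
  have hne : (sphere (0 : EuclideanSpace ℝ κ) 1).Nonempty :=
    ⟨EuclideanSpace.single (Classical.arbitrary κ) 1, by simp [EuclideanSpace.norm_single]⟩
  obtain ⟨x, hx, hmin⟩ := hc.exists_isMinOn hne ((mcal A).continuous.norm.continuousOn)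
  rw [mem_sphere_zero_iff_norm] at hx
  exact ⟨x, hx, fun y hy => hmin (by rwa [mem_sphere_zero_iff_norm])⟩

section
variable {ι κ : Type*} [Fintype ι] [Fintype κ] [DecidableEq κ]

lemma opNorm_eq_max [Nonempty κ] (A : Matrix ι κ ℝ) {x₀ : EuclideanSpace ℝ κ} (hx₀ : ‖x₀‖ = 1)
    (hmax : ∀ y : EuclideanSpace ℝ κ, ‖y‖ = 1 → ‖mcal A y‖ ≤ ‖mcal A x₀‖) :
    ‖mcal A‖ = ‖mcal A x₀‖ := by
  refine le_antisymm (ContinuousLinearMap.opNorm_le_bound _ (norm_nonneg _) fun y => ?_) ?_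
  · rcases eq_or_ne y 0 with rfl | hy
    · simp
    · have h1 : ‖(‖y‖⁻¹ • y)‖ = 1 := norm_smul_inv_norm hy
      have := hmax _ h1
      rw [_root_.map_smul, norm_smul, norm_inv, norm_norm] at this
      have hyp : (0:ℝ) < ‖y‖ := norm_pos_iff.mpr hy
      calc ‖mcal A y‖ = ‖y‖ * (‖y‖⁻¹ * ‖mcal A y‖) := by field_simp
        _ ≤ ‖y‖ * ‖mcal A x₀‖ := by nlinarith [this, hyp]
        _ = ‖mcal A x₀‖ * ‖y‖ := mul_comm _ _
  · simpa [hx₀] using (mcal A).le_opNorm x₀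

lemma sval_one_eq_opNorm [Nonempty κ] (A : Matrix ι κ ℝ) : sval A 1 = ‖mcal A‖ := by
  obtain ⟨x₀, hx₀, hmax⟩ := exists_max_sphere A
  have hnorm := opNorm_eq_max A hx₀ hmax
  set x₀' : κ → ℝ := (WithLp.equiv 2 (κ → ℝ)) x₀ with hx₀'def
  have hback : (WithLp.equiv 2 (κ → ℝ)).symm x₀' = x₀ := Equiv.symm_apply_apply _ _
  have hx₀'ne : x₀' ≠ 0 := by
    intro h
    rw [h] at hback
    rw [← hback] at hx₀
    simp at hx₀
  have hx₀'norm : enorm₂ x₀' = 1 := by rw [enorm₂_eq_norm, hback, hx₀]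
  apply IsGreatest.csSup_eq
  constructor
  · refine ⟨Submodule.span ℝ {x₀'}, finrank_span_singleton hx₀'ne, fun x hx => ?_⟩
    obtain ⟨c, rfl⟩ := Submodule.mem_span_singleton.mp hx
    have h1 : enorm₂ (c • x₀') = |c| := by
      rw [enorm₂_eq_norm]
      have : (WithLp.equiv 2 (κ → ℝ)).symm (c • x₀') = c • x₀ := by
        rw [← hback]; rfl
      rw [this, norm_smul, hx₀, Real.norm_eq_abs, mul_one]
    have h2 : enorm₂ (A *ᵥ (c • x₀')) = |c| * ‖mcal A x₀‖ := by
      rw [enorm₂_mulVec_eq]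
      have : (WithLp.equiv 2 (κ → ℝ)).symm (c • x₀') = c • x₀ := by
        rw [← hback]; rfl
      rw [this, (mcal A).map_smul, norm_smul, Real.norm_eq_abs]
    rw [h1, h2, hnorm, mul_comm]
  · rintro t ⟨V, hV1, hV⟩
    have hVne : ∃ x ∈ V, x ≠ (0 : κ → ℝ) := by
      by_contra h
      push_neg at h
      have : V = ⊥ := (Submodule.eq_bot_iff V).mpr h
      rw [this] at hV1
      simp at hV1
    obtain ⟨x, hxV, hxne⟩ := hVne
    have h1 := hV x hxV
    have h2 : enorm₂ (A *ᵥ x) ≤ ‖mcal A‖ * enorm₂ x := by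
      rw [enorm₂_mulVec_eq, enorm₂_eq_norm]
      exact (mcal A).le_opNorm _
    have h3 : (0:ℝ) < enorm₂ x := enorm₂_pos hxne
    nlinarith [h1, h2, h3]
end

section
variable {ι κ μ ν : Type*} [Fintype ι] [Fintype κ] [Fintype μ] [Fintype ν]

lemma dot_self_nonneg (x : ι → ℝ) : 0 ≤ x ⬝ᵥ x :=
  Finset.sum_nonneg fun i _ => mul_self_nonneg _

lemma dot_le_enorm (x y : ι → ℝ) : x ⬝ᵥ y ≤ enorm₂ x * enorm₂ y := by
  have h := real_inner_le_norm ((WithLp.equiv 2 (ι → ℝ)).symm x) ((WithLp.equiv 2 (ι → ℝ)).symm y)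
  rw [← enorm₂_eq_norm, ← enorm₂_eq_norm] at h
  refine le_trans (le_of_eq ?_) h
  rw [PiLp.inner_apply]
  simp [dotProduct, RCLike.inner_apply]
  exact Finset.sum_congr rfl fun i _ => mul_comm _ _

lemma min_bound {E F : Type*} [NormedAddCommGroup E] [NormedSpace ℝ E]
    [NormedAddCommGroup F] [NormedSpace ℝ F] (f : E →L[ℝ] F) {x₀ : E} (hx₀ : ‖x₀‖ = 1)
    (hmin : ∀ y, ‖y‖ = 1 → ‖f x₀‖ ≤ ‖f y‖) : ∀ y, ‖f x₀‖ * ‖y‖ ≤ ‖f y‖ := by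
  intro y
  rcases eq_or_ne y 0 with rfl | hy
  · simp
  · have h1 : ‖(‖y‖⁻¹ • y)‖ = 1 := norm_smul_inv_norm hy
    have h2 := hmin _ h1
    rw [f.map_smul, norm_smul, norm_inv, norm_norm] at h2
    have hyp : (0:ℝ) < ‖y‖ := norm_pos_iff.mpr hy
    rw [inv_mul_eq_div, le_div_iff₀ hyp] at h2
    exact h2

variable [DecidableEq ι] [DecidableEq κ] [DecidableEq μ]

lemma dot_transpose_mulVec (W : Matrix ι κ ℝ) (x : ι → ℝ) (u : κ → ℝ) :
    (Wᵀ *ᵥ x) ⬝ᵥ u = x ⬝ᵥ (W *ᵥ u) := by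
  rw [dotProduct_mulVec x W, ← mulVec_transpose]

lemma enorm₂_transpose_mulVec_le {W : Matrix ι κ ℝ} (hW : Wᵀ * W = 1) (x : ι → ℝ) :
    enorm₂ (Wᵀ *ᵥ x) ≤ enorm₂ x := by
  rcases eq_or_ne (Wᵀ *ᵥ x) 0 with h | h
  · rw [h, enorm₂_zero]; exact enorm₂_nonneg x
  · have key : (Wᵀ *ᵥ x) ⬝ᵥ (Wᵀ *ᵥ x) = x ⬝ᵥ (W *ᵥ (Wᵀ *ᵥ x)) := dot_transpose_mulVec W x _
    have h1 : x ⬝ᵥ (W *ᵥ (Wᵀ *ᵥ x)) ≤ enorm₂ x * enorm₂ (W *ᵥ (Wᵀ *ᵥ x)) := dot_le_enorm _ _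
    rw [enorm₂_mulVec_of_orth hW] at h1
    have h2 : enorm₂ (Wᵀ *ᵥ x) ^ 2 = (Wᵀ *ᵥ x) ⬝ᵥ (Wᵀ *ᵥ x) := by
      rw [enorm₂_eq_sqrt_dot, Real.sq_sqrt (dot_self_nonneg _)]
    have h3 : 0 < enorm₂ (Wᵀ *ᵥ x) := enorm₂_pos h
    nlinarith [h1, h2, h3, key]

lemma enorm₂_transpose_apply_le (B : Matrix ι κ ℝ) (x : ι → ℝ) :
    enorm₂ (Bᵀ *ᵥ x) ≤ ‖mcal B‖ * enorm₂ x := by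
  rcases eq_or_ne (Bᵀ *ᵥ x) 0 with h | h
  · rw [h, enorm₂_zero]
    exact mul_nonneg (norm_nonneg _) (enorm₂_nonneg x)
  · have key : (Bᵀ *ᵥ x) ⬝ᵥ (Bᵀ *ᵥ x) = x ⬝ᵥ (B *ᵥ (Bᵀ *ᵥ x)) := dot_transpose_mulVec B x _
    have h1 : x ⬝ᵥ (B *ᵥ (Bᵀ *ᵥ x)) ≤ enorm₂ x * enorm₂ (B *ᵥ (Bᵀ *ᵥ x)) := dot_le_enorm _ _
    have h2 : enorm₂ (B *ᵥ (Bᵀ *ᵥ x)) ≤ ‖mcal B‖ * enorm₂ (Bᵀ *ᵥ x) := by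
      rw [enorm₂_mulVec_eq, enorm₂_eq_norm]
      exact (mcal B).le_opNorm _
    have h3 : enorm₂ (Bᵀ *ᵥ x) ^ 2 = (Bᵀ *ᵥ x) ⬝ᵥ (Bᵀ *ᵥ x) := by
      rw [enorm₂_eq_sqrt_dot, Real.sq_sqrt (dot_self_nonneg _)]
    have h4 : 0 < enorm₂ (Bᵀ *ᵥ x) := enorm₂_pos h
    nlinarith [h1, h2, h3, h4, key, enorm₂_nonneg x, norm_nonneg (mcal B)]

lemma opNorm_transpose_le (B : Matrix ι κ ℝ) : ‖mcal Bᵀ‖ ≤ ‖mcal B‖ := by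
  refine ContinuousLinearMap.opNorm_le_bound _ (norm_nonneg _) fun x => ?_
  have := enorm₂_transpose_apply_le B ((WithLp.equiv 2 (ι → ℝ)) x)
  rwa [enorm₂_mulVec_eq, Equiv.symm_apply_apply, enorm₂_eq_norm, Equiv.symm_apply_apply] at this

lemma opNorm_transpose (B : Matrix ι κ ℝ) : ‖mcal Bᵀ‖ = ‖mcal B‖ := by
  refine le_antisymm (opNorm_transpose_le B) ?_
  have := opNorm_transpose_le Bᵀ
  rwa [transpose_transpose] at this
end

section
variable {ι κ : Type*} [Fintype ι] [Fintype κ] [DecidableEq κ]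

lemma mcal_mul_apply {μ : Type*} [Fintype μ] [DecidableEq μ] (A : Matrix ι κ ℝ)
    (B : Matrix κ μ ℝ) (x : EuclideanSpace ℝ μ) :
    mcal (A * B) x = mcal A (mcal B x) := by
  rw [mcal_apply, mcal_apply, mcal_apply, Equiv.apply_symm_apply, mulVec_mulVec]

lemma sval_card_eq_min [Nonempty κ] (C : Matrix ι κ ℝ) {x₀ : EuclideanSpace ℝ κ}
    (hx₀ : ‖x₀‖ = 1) (hmin : ∀ y : EuclideanSpace ℝ κ, ‖y‖ = 1 → ‖mcal C x₀‖ ≤ ‖mcal C y‖) :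
    sval C (Fintype.card κ) = ‖mcal C x₀‖ := by
  have hbound := min_bound (mcal C) hx₀ hmin
  apply IsGreatest.csSup_eq
  constructor
  · refine ⟨⊤, by rw [finrank_top, Module.finrank_fintype_fun_eq_card], fun x _ => ?_⟩
    have := hbound ((WithLp.equiv 2 (κ → ℝ)).symm x)
    rwa [← enorm₂_eq_norm, ← enorm₂_mulVec_eq] at this
  · rintro t ⟨V, hV1, hV⟩
    have hVtop : V = ⊤ := by
      apply Submodule.eq_top_of_finrank_eq
      rw [hV1, Module.finrank_fintype_fun_eq_card]
    subst hVtop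
    have := hV ((WithLp.equiv 2 (κ → ℝ)) x₀) trivial
    rw [enorm₂_mulVec_eq, Equiv.symm_apply_apply, enorm₂_eq_norm, Equiv.symm_apply_apply, hx₀,
      mul_one] at this
    exact this

lemma opNorm_inv_eq [Nonempty κ] {C : Matrix κ κ ℝ} (hC : IsUnit C.det)
    {x₀ : EuclideanSpace ℝ κ} (hx₀ : ‖x₀‖ = 1)
    (hmin : ∀ y : EuclideanSpace ℝ κ, ‖y‖ = 1 → ‖mcal C x₀‖ ≤ ‖mcal C y‖) :
    ‖mcal C⁻¹‖ = 1 / ‖mcal C x₀‖ := by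
  have hinv : ∀ y : EuclideanSpace ℝ κ, mcal C⁻¹ (mcal C y) = y := by
    intro y
    rw [← mcal_mul_apply, nonsing_inv_mul C hC, mcal_apply, one_mulVec, Equiv.symm_apply_apply]
  have hinv2 : ∀ y : EuclideanSpace ℝ κ, mcal C (mcal C⁻¹ y) = y := by
    intro y
    rw [← mcal_mul_apply, mul_nonsing_inv C hC, mcal_apply, one_mulVec, Equiv.symm_apply_apply]
  set m := ‖mcal C x₀‖ with hm
  have hbound := min_bound (mcal C) hx₀ hmin
  have hmpos : 0 < m := by
    rcases (norm_nonneg (mcal C x₀)).lt_or_eq with h | h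
    · exact h
    · exfalso
      have h0 : mcal C x₀ = 0 := by
        rw [← norm_eq_zero]; exact h.symm
      have := hinv x₀
      rw [h0, (mcal C⁻¹).map_zero] at this
      rw [← this] at hx₀
      simp at hx₀
  refine le_antisymm (ContinuousLinearMap.opNorm_le_bound _ (by positivity) fun y => ?_) ?_
  · have h1 := hbound (mcal C⁻¹ y)
    rw [hinv2 y] at h1
    rw [one_div]
    calc ‖mcal C⁻¹ y‖ ≤ m⁻¹ * (m * ‖mcal C⁻¹ y‖) := by
          rw [← mul_assoc, inv_mul_cancel₀ hmpos.ne', one_mul]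
      _ ≤ m⁻¹ * ‖y‖ := by
          exact mul_le_mul_of_nonneg_left h1 (by positivity)
  · have h2 := (mcal C⁻¹).le_opNorm (mcal C x₀)
    rw [hinv x₀, hx₀] at h2
    rw [div_le_iff₀ hmpos]
    rw [hm, mul_comm]
    rwa [mul_comm] at h2
end

section
variable {ι κ μ : Type*} [Fintype ι] [Fintype κ] [Fintype μ]
  [DecidableEq ι] [DecidableEq κ] [DecidableEq μ]

lemma enorm₂_smul (c : ℝ) (x : κ → ℝ) : enorm₂ (c • x) = |c| * enorm₂ x := by
  rw [enorm₂_eq_norm, enorm₂_eq_norm]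
  have : (WithLp.equiv 2 (κ → ℝ)).symm (c • x) = c • (WithLp.equiv 2 (κ → ℝ)).symm x := rfl
  rw [this, norm_smul, Real.norm_eq_abs]

lemma norm_mcal_orth_apply {U : Matrix ι κ ℝ} (hU : Uᵀ * U = 1) (x : EuclideanSpace ℝ κ) :
    ‖mcal U x‖ = ‖x‖ := by
  have := enorm₂_mulVec_of_orth hU ((WithLp.equiv 2 (κ → ℝ)) x)
  rwa [enorm₂_mulVec_eq, Equiv.symm_apply_apply, enorm₂_eq_norm, Equiv.symm_apply_apply] at this

lemma norm_mcal_transpose_le {W : Matrix ι κ ℝ} (hW : Wᵀ * W = 1) (x : EuclideanSpace ℝ ι) :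
    ‖mcal Wᵀ x‖ ≤ ‖x‖ := by
  have := enorm₂_transpose_mulVec_le hW ((WithLp.equiv 2 (ι → ℝ)) x)
  rwa [enorm₂_mulVec_eq, Equiv.symm_apply_apply, enorm₂_eq_norm, Equiv.symm_apply_apply] at this

lemma mcal_transpose_mcal {W : Matrix ι κ ℝ} (hW : Wᵀ * W = 1) (y : EuclideanSpace ℝ κ) :
    mcal Wᵀ (mcal W y) = y := by
  rw [← mcal_mul_apply, hW, mcal_apply, one_mulVec, Equiv.symm_apply_apply]

lemma opNorm_conj {U : Matrix ι κ ℝ} {W : Matrix μ κ ℝ} (hU : Uᵀ * U = 1) (hW : Wᵀ * W = 1)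
    (D : Matrix κ κ ℝ) : ‖mcal (U * D * Wᵀ)‖ = ‖mcal D‖ := by
  have happ : ∀ x : EuclideanSpace ℝ μ, mcal (U * D * Wᵀ) x = mcal U (mcal D (mcal Wᵀ x)) := by
    intro x
    rw [← mcal_mul_apply, ← mcal_mul_apply]
  refine le_antisymm ?_ ?_
  · refine ContinuousLinearMap.opNorm_le_bound _ (norm_nonneg _) fun x => ?_
    rw [happ, norm_mcal_orth_apply hU]
    calc ‖mcal D (mcal Wᵀ x)‖ ≤ ‖mcal D‖ * ‖mcal Wᵀ x‖ := (mcal D).le_opNorm _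
      _ ≤ ‖mcal D‖ * ‖x‖ := by
          exact mul_le_mul_of_nonneg_left (norm_mcal_transpose_le hW x) (norm_nonneg _)
  · refine ContinuousLinearMap.opNorm_le_bound _ (norm_nonneg _) fun y => ?_
    have h1 : mcal (U * D * Wᵀ) (mcal W y) = mcal U (mcal D y) := by
      rw [happ, mcal_transpose_mcal hW]
    have h2 := (mcal (U * D * Wᵀ)).le_opNorm (mcal W y)
    rw [h1, norm_mcal_orth_apply hU, norm_mcal_orth_apply hW] at h2
    exact h2
end

section
variable {ι κ μ : Type*} [Fintype ι] [Fintype κ] [Fintype μ]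
  [DecidableEq ι] [DecidableEq κ] [DecidableEq μ]

set_option maxHeartbeats 1000000 in
lemma sval_conj [Nonempty κ] {U : Matrix ι κ ℝ} {W : Matrix μ κ ℝ}
    (hU : Uᵀ * U = 1) (hW : Wᵀ * W = 1) (C : Matrix κ κ ℝ)
    {x₀ : EuclideanSpace ℝ κ} (hx₀ : ‖x₀‖ = 1)
    (hmin : ∀ y : EuclideanSpace ℝ κ, ‖y‖ = 1 → ‖mcal C x₀‖ ≤ ‖mcal C y‖) :
    sval (U * C * Wᵀ) (Fintype.card κ) = ‖mcal C x₀‖ := by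
  set m := ‖mcal C x₀‖ with hm
  have hm0 : 0 ≤ m := norm_nonneg _
  set x₀' : κ → ℝ := (WithLp.equiv 2 (κ → ℝ)) x₀ with hx₀'def
  have hback : (WithLp.equiv 2 (κ → ℝ)).symm x₀' = x₀ := Equiv.symm_apply_apply _ _
  have hx₀'norm : enorm₂ x₀' = 1 := by rw [enorm₂_eq_norm, hback, hx₀]
  have hx₀'ne : x₀' ≠ 0 := by
    intro h; rw [h, enorm₂_zero] at hx₀'norm; norm_num at hx₀'norm
  -- the bound in enorm₂ form
  have hbound : ∀ y : κ → ℝ, m * enorm₂ y ≤ enorm₂ (C *ᵥ y) := by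
    intro y
    have := min_bound (mcal C) hx₀ hmin ((WithLp.equiv 2 (κ → ℝ)).symm y)
    rwa [← enorm₂_eq_norm, ← enorm₂_mulVec_eq] at this
  have hCnorm : enorm₂ (C *ᵥ x₀') = m := by
    rw [enorm₂_mulVec_eq, hback]
  -- mulVec unfolding for the triple product
  have happ : ∀ x : μ → ℝ, (U * C * Wᵀ) *ᵥ x = U *ᵥ (C *ᵥ (Wᵀ *ᵥ x)) := by
    intro x
    rw [mulVec_mulVec, mulVec_mulVec, Matrix.mul_assoc]
  have henorm : ∀ x : μ → ℝ, enorm₂ ((U * C * Wᵀ) *ᵥ x) = enorm₂ (C *ᵥ (Wᵀ *ᵥ x)) := by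
    intro x; rw [happ, enorm₂_mulVec_of_orth hU]
  have hWinj : Function.Injective (mulVecLin W) := by
    intro a b hab
    simp only [mulVecLin_apply] at hab
    have : Wᵀ *ᵥ (W *ᵥ a) = Wᵀ *ᵥ (W *ᵥ b) := by rw [hab]
    rwa [mulVec_mulVec, mulVec_mulVec, hW, one_mulVec, one_mulVec] at this
  have hWTW : ∀ y : κ → ℝ, Wᵀ *ᵥ (W *ᵥ y) = y := by
    intro y; rw [mulVec_mulVec, hW, one_mulVec]
  apply IsGreatest.csSup_eq
  constructor
  · -- m is in the set, witnessed by range of W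
    refine ⟨LinearMap.range (mulVecLin W), ?_, ?_⟩
    · rw [LinearMap.finrank_range_of_inj hWinj, Module.finrank_fintype_fun_eq_card]
    · rintro x ⟨y, rfl⟩
      simp only [mulVecLin_apply]
      rw [henorm, hWTW, enorm₂_mulVec_of_orth hW]
      exact hbound y
  · -- upper bound
    rintro t ⟨V, hV1, hV⟩
    set w₀ : μ → ℝ := W *ᵥ x₀' with hw₀def
    have hWw₀ : Wᵀ *ᵥ w₀ = x₀' := hWTW x₀'
    have hw₀ne : w₀ ≠ 0 := by
      intro h; rw [h, mulVec_zero] at hWw₀; exact hx₀'ne hWw₀.symm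
    have hw₀norm : enorm₂ w₀ = 1 := by rw [hw₀def, enorm₂_mulVec_of_orth hW, hx₀'norm]
    set K := LinearMap.ker (mulVecLin Wᵀ) with hKdef
    have hrange : LinearMap.range (mulVecLin Wᵀ) = ⊤ := by
      rw [LinearMap.range_eq_top]
      intro y
      exact ⟨W *ᵥ y, hWTW y⟩
    have hker : Fintype.card κ + finrank ℝ K = Fintype.card μ := by
      have := LinearMap.finrank_range_add_finrank_ker (mulVecLin Wᵀ)
      rw [hrange, finrank_top, Module.finrank_fintype_fun_eq_card,
        Module.finrank_fintype_fun_eq_card] at this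
      exact this
    set T := K ⊔ Submodule.span ℝ {w₀} with hTdef
    have hinf : K ⊓ Submodule.span ℝ {w₀} = ⊥ := by
      rw [Submodule.eq_bot_iff]
      rintro z ⟨hzK, hzS⟩
      obtain ⟨c, rfl⟩ := Submodule.mem_span_singleton.mp hzS
      have hz0 : Wᵀ *ᵥ (c • w₀) = 0 := hzK
      rw [mulVec_smul, hWw₀] at hz0
      rcases smul_eq_zero.mp hz0 with hc | hx
      · rw [hc, zero_smul]
      · exact absurd hx hx₀'ne
    have hTrank : finrank ℝ T = finrank ℝ K + 1 := by
      have := Submodule.finrank_sup_add_finrank_inf_eq K (Submodule.span ℝ {w₀})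
      rw [hinf, finrank_bot, add_zero, finrank_span_singleton hw₀ne] at this
      exact this
    -- find nonzero x in V ⊓ T
    have hVT : 0 < finrank ℝ ↥(V ⊓ T) := by
      have hsum := Submodule.finrank_sup_add_finrank_inf_eq V T
      have hle : finrank ℝ ↥(V ⊔ T) ≤ Fintype.card μ := by
        have := Submodule.finrank_le (V ⊔ T)
        rwa [Module.finrank_fintype_fun_eq_card] at this
      omega
    obtain ⟨⟨x, hxVT⟩, hxne⟩ := Module.finrank_pos_iff_exists_ne_zero.mp hVT
    have hxne' : x ≠ 0 := by
      intro h; apply hxne; exact Subtype.ext h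
    obtain ⟨hxV, hxT⟩ := hxVT
    obtain ⟨z, hzK, u, huS, rfl⟩ := Submodule.mem_sup.mp hxT
    obtain ⟨c, rfl⟩ := Submodule.mem_span_singleton.mp huS
    have hzker : Wᵀ *ᵥ z = 0 := hzK
    -- key computations
    have hWx : Wᵀ *ᵥ (z + c • w₀) = c • x₀' := by
      rw [mulVec_add, hzker, zero_add, mulVec_smul, hWw₀]
    have hAx : enorm₂ ((U * C * Wᵀ) *ᵥ (z + c • w₀)) = |c| * m := by
      rw [henorm, hWx, mulVec_smul, enorm₂_smul, hCnorm]
    -- orthogonality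
    have hzw : z ⬝ᵥ w₀ = 0 := by
      rw [hw₀def, ← dot_transpose_mulVec, hzker, zero_dotProduct]
    have hwz : w₀ ⬝ᵥ z = 0 := by rw [dotProduct_comm]; exact hzw
    have hww : w₀ ⬝ᵥ w₀ = 1 := by
      have := enorm₂_eq_sqrt_dot w₀
      rw [hw₀norm] at this
      have h2 : Real.sqrt (w₀ ⬝ᵥ w₀) = 1 := this.symm
      nlinarith [Real.sq_sqrt (dot_self_nonneg w₀), h2]
    have hxx : (z + c • w₀) ⬝ᵥ (z + c • w₀) = z ⬝ᵥ z + c ^ 2 := by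
      simp [dotProduct_add, add_dotProduct, dotProduct_smul, smul_dotProduct, hzw, hwz, hww]
      ring
    have hcle : |c| ≤ enorm₂ (z + c • w₀) := by
      rw [enorm₂_eq_sqrt_dot, hxx, ← Real.sqrt_sq_eq_abs]
      exact Real.sqrt_le_sqrt (by nlinarith [dot_self_nonneg z])
    have hxpos : 0 < enorm₂ (z + c • w₀) := enorm₂_pos hxne'
    have ht := hV _ hxV
    rw [hAx] at ht
    nlinarith [ht, hcle, hxpos, hm0]
end

lemma mulVecLin_injective_of_rank {n r : ℕ} {L : Matrix (Fin n) (Fin r) ℝ} (hL : L.rank = r) :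
    Function.Injective L.mulVecLin := by
  have hrank : finrank ℝ (LinearMap.range L.mulVecLin) = r := hL
  have h := LinearMap.finrank_range_add_finrank_ker L.mulVecLin
  rw [hrank, Module.finrank_fintype_fun_eq_card, Fintype.card_fin] at h
  have hker : finrank ℝ (LinearMap.ker L.mulVecLin) = 0 := by omega
  rw [← LinearMap.ker_eq_bot]
  exact Submodule.finrank_eq_zero.mp hker

lemma posDef_transpose_mul_self {n r : ℕ} {L : Matrix (Fin n) (Fin r) ℝ} (hL : L.rank = r) :
    (Lᵀ * L).PosDef := by
  rw [posDef_iff_dotProduct_mulVec]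
  constructor
  · have := isHermitian_conjTranspose_mul_self L
    rwa [conjTranspose_eq_transpose_of_trivial] at this
  · intro x hx
    have hinj := mulVecLin_injective_of_rank hL
    have hLx : L *ᵥ x ≠ 0 := by
      intro h
      apply hx
      apply hinj
      simp only [mulVecLin_apply, h, map_zero]
    have key : star x ⬝ᵥ ((Lᵀ * L) *ᵥ x) = (L *ᵥ x) ⬝ᵥ (L *ᵥ x) := by
      rw [star_trivial, ← mulVec_mulVec, dotProduct_comm, dot_transpose_mulVec]
    rw [key]
    exact lt_of_le_of_ne (dot_self_nonneg _) (Ne.symm (mt dotProduct_self_eq_zero.mp hLx))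

open scoped MatrixOrder in
lemma stmt6_pos (n₁ n₂ r : ℕ)
    (L : Matrix (Fin n₁) (Fin r) ℝ) (R : Matrix (Fin n₂) (Fin r) ℝ)
    (hL : L.rank = r) (hR : R.rank = r) (hr : 0 < r) :
    spec (L * (Lᵀ * L)⁻¹ * (Rᵀ * R)⁻¹ * Rᵀ) = 1 / sval (L * Rᵀ) r := by
  haveI : Nonempty (Fin r) := Fin.pos_iff_nonempty.mp hr
  have hn₂ : 0 < n₂ := by
    have := R.rank_le_card_height
    rw [hR, Fintype.card_fin] at this
    omega
  haveI : Nonempty (Fin n₂) := Fin.pos_iff_nonempty.mp hn₂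
  have hG := posDef_transpose_mul_self hL
  have hH := posDef_transpose_mul_self hR
  set S := CFC.sqrt (Lᵀ * L) with hSdef
  set T := CFC.sqrt (Rᵀ * R) with hTdef
  have hS : S * S = Lᵀ * L := CFC.sqrt_mul_sqrt_self _ hG.posSemidef.nonneg
  have hT : T * T = Rᵀ * R := CFC.sqrt_mul_sqrt_self _ hH.posSemidef.nonneg
  have hSsymm : Sᵀ = S := by
    rw [← conjTranspose_eq_transpose_of_trivial]
    exact (nonneg_iff_posSemidef.mp (CFC.sqrt_nonneg _)).1
  have hTsymm : Tᵀ = T := by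
    rw [← conjTranspose_eq_transpose_of_trivial]
    exact (nonneg_iff_posSemidef.mp (CFC.sqrt_nonneg _)).1
  have hSdet : IsUnit S.det := by
    rw [isUnit_iff_ne_zero]
    intro h
    have : (Lᵀ * L).det = 0 := by rw [← hS, det_mul, h, mul_zero]
    exact absurd this hG.det_pos.ne'
  have hTdet : IsUnit T.det := by
    rw [isUnit_iff_ne_zero]
    intro h
    have : (Rᵀ * R).det = 0 := by rw [← hT, det_mul, h, mul_zero]
    exact absurd this hH.det_pos.ne'
  set U := L * S⁻¹ with hUdef
  set W := R * T⁻¹ with hWdef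
  have hSinvT : (S⁻¹)ᵀ = S⁻¹ := by rw [transpose_nonsing_inv, hSsymm]
  have hTinvT : (T⁻¹)ᵀ = T⁻¹ := by rw [transpose_nonsing_inv, hTsymm]
  have hUorth : Uᵀ * U = 1 := by
    rw [hUdef, transpose_mul, hSinvT]
    calc S⁻¹ * Lᵀ * (L * S⁻¹) = S⁻¹ * (Lᵀ * L) * S⁻¹ := by
          rw [Matrix.mul_assoc, Matrix.mul_assoc, Matrix.mul_assoc]
      _ = S⁻¹ * (S * S) * S⁻¹ := by rw [hS]
      _ = (S⁻¹ * S) * (S * S⁻¹) := by rw [Matrix.mul_assoc, Matrix.mul_assoc, Matrix.mul_assoc]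
      _ = 1 := by rw [nonsing_inv_mul _ hSdet, mul_nonsing_inv _ hSdet, Matrix.one_mul]
  have hWorth : Wᵀ * W = 1 := by
    rw [hWdef, transpose_mul, hTinvT]
    calc T⁻¹ * Rᵀ * (R * T⁻¹) = T⁻¹ * (Rᵀ * R) * T⁻¹ := by
          rw [Matrix.mul_assoc, Matrix.mul_assoc, Matrix.mul_assoc]
      _ = T⁻¹ * (T * T) * T⁻¹ := by rw [hT]
      _ = (T⁻¹ * T) * (T * T⁻¹) := by rw [Matrix.mul_assoc, Matrix.mul_assoc, Matrix.mul_assoc]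
      _ = 1 := by rw [nonsing_inv_mul _ hTdet, mul_nonsing_inv _ hTdet, Matrix.one_mul]
  have hLU : L = U * S := by rw [hUdef, nonsing_inv_mul_cancel_right _ _ hSdet]
  have hRW : R = W * T := by rw [hWdef, nonsing_inv_mul_cancel_right _ _ hTdet]
  have hRT : Rᵀ = T * Wᵀ := by rw [hRW, transpose_mul, hTsymm]
  set C := S * T with hCdef
  have hCdet : IsUnit C.det := by rw [hCdef, det_mul]; exact hSdet.mul hTdet
  have hA : L * Rᵀ = U * C * Wᵀ := by
    rw [hRT, hLU, hCdef]
    rw [Matrix.mul_assoc U S (T * Wᵀ), ← Matrix.mul_assoc S T Wᵀ, ← Matrix.mul_assoc U (S * T) Wᵀ]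
  have hLG : L * (Lᵀ * L)⁻¹ = U * S⁻¹ := by
    rw [← hS, Matrix.mul_inv_rev, ← Matrix.mul_assoc, hUdef]
  have hHR : (Rᵀ * R)⁻¹ * Rᵀ = T⁻¹ * Wᵀ := by
    rw [← hT, hRT, Matrix.mul_inv_rev]
    calc T⁻¹ * T⁻¹ * (T * Wᵀ) = T⁻¹ * (T⁻¹ * T) * Wᵀ := by
          rw [Matrix.mul_assoc, Matrix.mul_assoc, Matrix.mul_assoc]
      _ = T⁻¹ * Wᵀ := by rw [nonsing_inv_mul _ hTdet, Matrix.mul_one]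
  have hM : L * (Lᵀ * L)⁻¹ * (Rᵀ * R)⁻¹ * Rᵀ = U * (S⁻¹ * T⁻¹) * Wᵀ := by
    calc L * (Lᵀ * L)⁻¹ * (Rᵀ * R)⁻¹ * Rᵀ = (L * (Lᵀ * L)⁻¹) * ((Rᵀ * R)⁻¹ * Rᵀ) := by
          rw [Matrix.mul_assoc]
      _ = (U * S⁻¹) * (T⁻¹ * Wᵀ) := by rw [hLG, hHR]
      _ = U * (S⁻¹ * T⁻¹) * Wᵀ := by
          rw [Matrix.mul_assoc U S⁻¹ (T⁻¹ * Wᵀ), ← Matrix.mul_assoc S⁻¹ T⁻¹ Wᵀ,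
            ← Matrix.mul_assoc U (S⁻¹ * T⁻¹) Wᵀ]
  have hD : S⁻¹ * T⁻¹ = (C⁻¹)ᵀ := by
    rw [hCdef, Matrix.mul_inv_rev, transpose_mul, hSinvT, hTinvT]
  obtain ⟨x₀, hx₀, hmin⟩ := exists_min_sphere C
  have hsvalA : sval (L * Rᵀ) r = ‖mcal C x₀‖ := by
    have h := sval_conj hUorth hWorth C hx₀ hmin
    rw [Fintype.card_fin] at h
    rw [hA]
    exact h
  have hspec : spec (L * (Lᵀ * L)⁻¹ * (Rᵀ * R)⁻¹ * Rᵀ) = 1 / ‖mcal C x₀‖ := by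
    rw [spec, hM, sval_one_eq_opNorm, opNorm_conj hUorth hWorth, hD, opNorm_transpose]
    exact opNorm_inv_eq hCdet hx₀ hmin
  rw [hspec, hsvalA]

lemma sval_k_zero {ι κ : Type*} [Fintype ι] [Fintype κ] (A : Matrix ι κ ℝ) : sval A 0 = 0 := by
  have hset : {t : ℝ | ∃ V : Submodule ℝ (κ → ℝ), finrank ℝ V = 0 ∧
      ∀ x ∈ V, t * enorm₂ x ≤ enorm₂ (A.mulVec x)} = Set.univ := by
    ext t
    simp only [Set.mem_setOf_eq, Set.mem_univ, iff_true]
    refine ⟨⊥, finrank_bot ℝ _, fun x hx => ?_⟩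
    rw [Submodule.mem_bot] at hx
    subst hx
    rw [enorm₂_zero, mulVec_zero, enorm₂_zero, mul_zero]
  rw [sval, hset, Real.sSup_univ]

lemma sval_zero_one {ι κ : Type*} [Fintype ι] [Fintype κ] :
    sval (0 : Matrix ι κ ℝ) 1 = 0 := by
  rcases isEmpty_or_nonempty κ with hκ | hκ
  · have hset : {t : ℝ | ∃ V : Submodule ℝ (κ → ℝ), finrank ℝ V = 1 ∧
        ∀ x ∈ V, t * enorm₂ x ≤ enorm₂ ((0 : Matrix ι κ ℝ).mulVec x)} = ∅ := by
      ext t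
      simp only [Set.mem_setOf_eq, Set.mem_empty_iff_false, iff_false]
      rintro ⟨V, hV1, -⟩
      have := Submodule.finrank_le V
      rw [hV1, Module.finrank_fintype_fun_eq_card, Fintype.card_eq_zero] at this
      omega
    rw [sval, hset, Real.sSup_empty]
  · have hset : {t : ℝ | ∃ V : Submodule ℝ (κ → ℝ), finrank ℝ V = 1 ∧
        ∀ x ∈ V, t * enorm₂ x ≤ enorm₂ ((0 : Matrix ι κ ℝ).mulVec x)} = Set.Iic 0 := by
      ext t
      simp only [Set.mem_setOf_eq, Set.mem_Iic]
      constructor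
      · rintro ⟨V, hV1, hV⟩
        have hVne : ∃ x ∈ V, x ≠ (0 : κ → ℝ) := by
          by_contra h
          push_neg at h
          have : V = ⊥ := (Submodule.eq_bot_iff V).mpr h
          rw [this] at hV1
          simp at hV1
        obtain ⟨x, hxV, hxne⟩ := hVne
        have h1 := hV x hxV
        rw [zero_mulVec, enorm₂_zero] at h1
        have h2 : 0 < enorm₂ x := enorm₂_pos hxne
        nlinarith
      · intro ht
        have hv : (fun _ => (1:ℝ) : κ → ℝ) ≠ 0 := by
          intro h
          have := congrFun h (Classical.arbitrary κ)
          norm_num at this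
        refine ⟨Submodule.span ℝ {(fun _ => (1:ℝ) : κ → ℝ)}, finrank_span_singleton hv,
          fun x _ => ?_⟩
        rw [zero_mulVec, enorm₂_zero]
        exact mul_nonpos_iff.mpr (Or.inr ⟨ht, enorm₂_nonneg x⟩)
    rw [sval, hset, csSup_Iic]


/-- Stmt 6: for full column rank L, R, ‖L(LᵀL)⁻¹(RᵀR)⁻¹Rᵀ‖ = 1/σ_r(LRᵀ). -/
theorem stmt6 (n₁ n₂ r : ℕ)
    (L : Matrix (Fin n₁) (Fin r) ℝ) (R : Matrix (Fin n₂) (Fin r) ℝ)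
    (hL : L.rank = r) (hR : R.rank = r) :
    spec (L * (Lᵀ * L)⁻¹ * (Rᵀ * R)⁻¹ * Rᵀ) = 1 / sval (L * Rᵀ) r := by
  rcases Nat.eq_zero_or_pos r with hr | hr
  · subst hr
    have hM0 : L * (Lᵀ * L)⁻¹ * (Rᵀ * R)⁻¹ * Rᵀ = 0 := by
      ext i j
      simp [Matrix.mul_apply]
    have hA0 : L * Rᵀ = 0 := by
      ext i j
      simp [Matrix.mul_apply]
    rw [hM0, hA0, sval_k_zero, div_zero, spec, sval_zero_one]
  · exact stmt6_pos n₁ n₂ r L R hL hR hr
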